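/- Let K be a field of characteristic zero, let g ≥ 13 be an integer, and let V₁, V₂, V₃ be K-vector spaces, each of dimension 2g, equipped with nondegenerate alternating bilinear forms ω₁, ω₂, ω₃ respectively. Let V = V₁ × V₂ × V₃ and let ω̃₁, ω̃₂, ω̃₃ denote the pullbacks of ω₁, ω₂, ω₃ to V via the projections. Then there do not exist alternating bilinear forms B' and B'' on V such that ω̃₁∧ω̃₂ + ω̃₂∧ω̃₃ + ω̃₁∧ω̃₃ = B'∧B'' as alternating 4-linear forms on V. -/

import Mathlib

/-- The wedge product of two alternating bilinear forms `B`, `B'` on `V`, as an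
alternating 4-linear form. -/
def wedgeProd {K V : Type*} [CommRing K] (B B' : V → V → K)
    (x₁ x₂ x₃ x₄ : V) : K :=
  B x₁ x₂ * B' x₃ x₄ - B x₁ x₃ * B' x₂ x₄ + B x₁ x₄ * B' x₂ x₃
    + B' x₁ x₂ * B x₃ x₄ - B' x₁ x₃ * B x₂ x₄ + B' x₁ x₄ * B x₂ x₃

open Module
set_option maxHeartbeats 1000000

section tools
variable {K : Type*} [Field K] {X : Type*} [AddCommGroup X] [Module K X]

/-- L1: common kernel of few functionals is nontrivial. -/
lemma tool_L1 [FiniteDimensional K X] {m : ℕ} (u : Fin m → (X →ₗ[K] K))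
    (hdim : m < finrank K X) : ∃ x : X, x ≠ 0 ∧ ∀ j, u j x = 0 := by
  have hninj : ¬ Function.Injective (LinearMap.pi u) := by
    intro hinj
    have h1 := LinearMap.finrank_le_finrank_of_injective hinj
    rw [Module.finrank_pi K] at h1
    simp at h1
    omega
  rw [← LinearMap.ker_eq_bot] at hninj
  obtain ⟨x, hx, hx0⟩ := (Submodule.ne_bot_iff _).1 hninj
  refine ⟨x, hx0, fun j => ?_⟩
  have := LinearMap.mem_ker.1 hx
  exact congrFun this j

/-- L4a: a pair with `ω x y = 1` inside the common kernel of few functionals. -/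
lemma tool_pair [FiniteDimensional K X] (ω : LinearMap.BilinForm K X)
    (hnd : ∀ v : X, (∀ w : X, ω v w = 0) → v = 0) {m : ℕ} (u : Fin m → (X →ₗ[K] K))
    (hdim : 2 * m < finrank K X) :
    ∃ x y : X, (∀ j, u j x = 0) ∧ (∀ j, u j y = 0) ∧ ω x y = 1 := by
  set U : Submodule K X := ⨅ j, LinearMap.ker (u j) with hU
  have hUker : U = LinearMap.ker (LinearMap.pi u) := (LinearMap.ker_pi u).symm
  have hUrank : finrank K X ≤ finrank K U + m := by
    have h2 := LinearMap.finrank_range_add_finrank_ker (LinearMap.pi u)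
    have h3 : finrank K (LinearMap.range (LinearMap.pi u)) ≤ m := by
      have := Submodule.finrank_le (LinearMap.range (LinearMap.pi u))
      rwa [Module.finrank_pi K, Fintype.card_fin] at this
    rw [hUker]; omega
  -- suppose ω vanishes identically on U
  by_cases hvan : ∀ x ∈ U, ∀ y ∈ U, ω x y = 0
  · exfalso
    -- map U into the dual annihilator of U
    have hmem : ∀ c : U, ω.domRestrict U c ∈ U.dualAnnihilator := by
      intro c
      rw [Submodule.mem_dualAnnihilator]
      intro w hw
      exact hvan c c.2 w hw
    let Φ : U →ₗ[K] U.dualAnnihilator := LinearMap.codRestrict _ (ω.domRestrict U) hmem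
    have hΦinj : Function.Injective Φ := by
      intro a b hab
      have hz : Φ (a - b) = 0 := by rw [map_sub, hab, sub_self]
      have h4 : ∀ w : X, ω ((a - b : U) : X) w = 0 := by
        intro w
        have h5 : ω.domRestrict U (a - b) = 0 := by
          have := congrArg Subtype.val hz
          simpa [Φ] using this
        have := congrFun (congrArg (fun f : X →ₗ[K] K => (f : X → K)) h5) w
        simpa using this
      have h9 : ((a - b : U) : X) = 0 := hnd _ h4
      have : a - b = 0 := Subtype.ext h9
      exact sub_eq_zero.1 this
    have h6 : finrank K U ≤ finrank K U.dualAnnihilator :=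
      LinearMap.finrank_le_finrank_of_injective hΦinj
    have h7 : finrank K (X ⧸ U) = finrank K U.dualAnnihilator :=
      (Subspace.quotEquivAnnihilator U).finrank_eq
    have h8 := Submodule.finrank_quotient_add_finrank U
    omega
  · push_neg at hvan
    obtain ⟨x, hxU, y, hyU, hxy⟩ := hvan
    refine ⟨x, (ω x y)⁻¹ • y, ?_, ?_, ?_⟩
    · intro j
      have := (Submodule.mem_iInf _).1 hxU j
      exact LinearMap.mem_ker.1 this
    · intro j
      have := (Submodule.mem_iInf _).1 hyU j
      have hy := LinearMap.mem_ker.1 this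
      simp [map_smul, hy]
    · simp [map_smul, smul_eq_mul]
      field_simp


/-- L4: a "symplectic quadruple" inside the common kernel of few functionals. -/
lemma tool_quad [FiniteDimensional K X] (ω : LinearMap.BilinForm K X)
    (hnd : ∀ v : X, (∀ w : X, ω v w = 0) → v = 0) {m : ℕ} (u : Fin m → (X →ₗ[K] K))
    (hdim : 2 * m + 4 < finrank K X) :
    ∃ x₁ x₂ x₃ x₄ : X, (∀ j, u j x₁ = 0) ∧ (∀ j, u j x₂ = 0) ∧ (∀ j, u j x₃ = 0) ∧
      (∀ j, u j x₄ = 0) ∧ ω x₁ x₂ = 1 ∧ ω x₃ x₄ = 1 ∧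
      ω x₁ x₃ = 0 ∧ ω x₁ x₄ = 0 ∧ ω x₂ x₃ = 0 ∧ ω x₂ x₄ = 0 := by
  obtain ⟨x₁, x₂, h1, h2, h12⟩ := tool_pair ω hnd u (by omega)
  obtain ⟨x₃, x₄, h3, h4, h34⟩ := tool_pair ω hnd
    (Fin.cons (ω x₁) (Fin.cons (ω x₂) u) : Fin (m + 1 + 1) → (X →ₗ[K] K)) (by omega)
  refine ⟨x₁, x₂, x₃, x₄, h1, h2, fun j => h3 j.succ.succ, fun j => h4 j.succ.succ,
    h12, h34, ?_, ?_, ?_, ?_⟩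
  · simpa using h3 0
  · simpa using h4 0
  · simpa using h3 1
  · simpa using h4 1

/-- L5: a nonzero multiple of a nondegenerate form is not a sum of two
"wedge products of functionals" when the dimension is bigger than 4. -/
lemma tool_L5 [FiniteDimensional K X] (ω : LinearMap.BilinForm K X)
    (hnd : ∀ v : X, (∀ w : X, ω v w = 0) → v = 0)
    (hdim : 4 < finrank K X) (c : K) (u₁ v₁ u₂ v₂ : X →ₗ[K] K)
    (h : ∀ x y : X, c * ω x y = u₁ x * v₁ y - u₁ y * v₁ x + (u₂ x * v₂ y - u₂ y * v₂ x)) :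
    c = 0 := by
  by_contra hc
  obtain ⟨x, hx0, hx⟩ := tool_L1 (![u₁, v₁, u₂, v₂]) (by omega)
  have e1 : u₁ x = 0 := hx 0
  have e2 : v₁ x = 0 := hx 1
  have e3 : u₂ x = 0 := hx 2
  have e4 : v₂ x = 0 := hx 3
  refine hx0 (hnd x fun w => ?_)
  have h0 : c * ω x w = 0 := by rw [h x w, e1, e2, e3, e4]; ring
  exact (mul_eq_zero.1 h0).resolve_left hc

/-- One-functional proportionality. -/
lemma tool_func (f g : X →ₗ[K] K) (h : ∀ x, f x = 0 → g x = 0) :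
    ∃ c : K, ∀ x, g x = c * f x := by
  by_cases hf : ∀ x, f x = 0
  · exact ⟨0, fun x => by rw [h x (hf x), hf x, mul_zero]⟩
  · push_neg at hf
    obtain ⟨x₀, hx₀⟩ := hf
    refine ⟨g x₀ / f x₀, fun v => ?_⟩
    have hker : f (v - (f v / f x₀) • x₀) = 0 := by
      rw [map_sub, map_smul, smul_eq_mul]
      field_simp
      ring
    have hgv := h _ hker
    rw [map_sub, map_smul, smul_eq_mul] at hgv
    have : g v = f v / f x₀ * g x₀ := by linear_combination hgv
    rw [this]; field_simp

/-- Lemma P: if the vanishing locus of a nonzero alternating bilinear form `φ` is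
contained in that of `ψ`, then `ψ` is a scalar multiple of `φ`. -/
lemma tool_prop (φ ψ : LinearMap.BilinForm K X) (hφ : LinearMap.IsAlt φ)
    (h : ∀ a b : X, φ a b = 0 → ψ a b = 0) :
    ∃ c : K, ∀ a b : X, ψ a b = c * φ a b := by
  have hrow : ∀ a : X, ∃ c : K, ∀ b : X, ψ a b = c * φ a b := fun a =>
    tool_func (φ a) (ψ a) (h a)
  choose c hc using hrow
  by_cases hφ0 : ∀ a b : X, φ a b = 0
  · exact ⟨0, fun a b => by rw [h a b (hφ0 a b), zero_mul]⟩
  push_neg at hφ0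
  obtain ⟨a₀, b₀, hab₀⟩ := hφ0
  -- independence of two rows
  have step : ∀ a a' x y : X, φ a x * φ a' y - φ a y * φ a' x ≠ 0 → c a = c a' := by
    intro a a' x y hD
    have key : ∀ b : X, (c (a + a') - c a) * φ a b + (c (a + a') - c a') * φ a' b = 0 := by
      intro b
      have e2 : ψ (a + a') b = c a * φ a b + c a' * φ a' b := by
        rw [map_add]; simp [LinearMap.add_apply, hc a b, hc a' b]
      have e1 : ψ (a + a') b = c (a + a') * (φ a b + φ a' b) := by
        rw [hc (a + a') b, map_add]; simp [LinearMap.add_apply]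
      linear_combination e2 - e1
    have k1 := key x
    have k2 := key y
    have hz1 : (c (a + a') - c a) * (φ a x * φ a' y - φ a y * φ a' x) = 0 := by
      linear_combination φ a' y * k1 - φ a' x * k2
    have h1 : c (a + a') = c a :=
      sub_eq_zero.1 ((mul_eq_zero.1 hz1).resolve_right hD)
    have hz2 : (c (a + a') - c a') * (φ a x * φ a' y - φ a y * φ a' x) = 0 := by
      linear_combination φ a x * k2 - φ a y * k1
    have h2 : c (a + a') = c a' :=
      sub_eq_zero.1 ((mul_eq_zero.1 hz2).resolve_right hD)
    rw [← h1, h2]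
  have step2 : ∀ a : X, φ a b₀ ≠ 0 → c a = c b₀ := by
    intro a hab
    refine step a b₀ a b₀ ?_
    have hba : φ b₀ a = -(φ a b₀) := by have h' := hφ.neg a b₀; linear_combination -h'
    rw [hφ a, hφ b₀, hba]
    intro hcon
    apply hab
    have : φ a b₀ * φ a b₀ = 0 := by linear_combination hcon
    exact mul_self_eq_zero.1 this
  refine ⟨c a₀, fun a b => ?_⟩
  by_cases ha : ∀ b'' : X, φ a b'' = 0
  · rw [h a b (ha b), ha b, mul_zero]
  push_neg at ha
  obtain ⟨b', hb'⟩ := ha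
  have hca₀ : c a₀ = c b₀ := step2 a₀ hab₀
  by_cases hDa : ∃ x y : X, φ a x * φ a₀ y - φ a y * φ a₀ x ≠ 0
  · obtain ⟨x, y, hD⟩ := hDa
    rw [hc a b, step a a₀ x y hD]
  · push_neg at hDa
    have hab : φ a b₀ ≠ 0 := by
      intro h0
      have hrel := hDa b' b₀
      rw [h0] at hrel
      have hz : φ a b' * φ a₀ b₀ = 0 := by linear_combination hrel
      rcases mul_eq_zero.1 hz with h' | h'
      · exact hb' h'
      · exact hab₀ h'
    rw [hc a b, step2 a hab, hca₀]
end tools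


section main
variable {K V₁ V₂ V₃ : Type*} [Field K]
    [AddCommGroup V₁] [Module K V₁] [AddCommGroup V₂] [Module K V₂]
    [AddCommGroup V₃] [Module K V₃]
    {ω₁ : LinearMap.BilinForm K V₁} {ω₂ : LinearMap.BilinForm K V₂}
    {ω₃ : LinearMap.BilinForm K V₃}
    {α β : LinearMap.BilinForm K (V₁ × V₂ × V₃)}

/-- abbreviation for the main hypothesis -/
def MainEq (ω₁ : LinearMap.BilinForm K V₁) (ω₂ : LinearMap.BilinForm K V₂)
    (ω₃ : LinearMap.BilinForm K V₃) (α β : LinearMap.BilinForm K (V₁ × V₂ × V₃)) : Prop :=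
  ∀ x₁ x₂ x₃ x₄ : V₁ × V₂ × V₃,
    wedgeProd (fun u w => ω₁ u.1 w.1) (fun u w => ω₂ u.2.1 w.2.1) x₁ x₂ x₃ x₄
    + wedgeProd (fun u w => ω₂ u.2.1 w.2.1) (fun u w => ω₃ u.2.2 w.2.2) x₁ x₂ x₃ x₄
    + wedgeProd (fun u w => ω₁ u.1 w.1) (fun u w => ω₃ u.2.2 w.2.2) x₁ x₂ x₃ x₄
    = wedgeProd (fun u w => α u w) (fun u w => β u w) x₁ x₂ x₃ x₄

lemma idE1 (heq : MainEq ω₁ ω₂ ω₃ α β) (a a' : V₁) (w w' : V₂ × V₃) :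
      ω₁ a a' * (ω₂ w.1 w'.1 + ω₃ w.2 w'.2)
        = α (a,0) (a',0) * β ((0:V₁),w) ((0:V₁),w')
          + β (a,0) (a',0) * α ((0:V₁),w) ((0:V₁),w')
          - α (a,0) ((0:V₁),w) * β (a',0) ((0:V₁),w')
          + α (a,0) ((0:V₁),w') * β (a',0) ((0:V₁),w)
          - β (a,0) ((0:V₁),w) * α (a',0) ((0:V₁),w')
          + β (a,0) ((0:V₁),w') * α (a',0) ((0:V₁),w) := by
  have h := heq (a,0) (a',0) ((0:V₁),w) ((0:V₁),w')
  simp only [wedgeProd, Prod.fst_zero, Prod.snd_zero, map_zero, LinearMap.zero_apply,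
    zero_mul, mul_zero, add_zero, zero_add, sub_zero, zero_sub, neg_zero] at h
  linear_combination h

lemma idE2 (heq : MainEq ω₁ ω₂ ω₃ α β) (b b' : V₂) (w w' : V₁ × V₃) :
      ω₂ b b' * (ω₁ w.1 w'.1 + ω₃ w.2 w'.2)
        = α ((0:V₁),b,(0:V₃)) ((0:V₁),b',(0:V₃)) * β (w.1,(0:V₂),w.2) (w'.1,(0:V₂),w'.2)
          + β ((0:V₁),b,(0:V₃)) ((0:V₁),b',(0:V₃)) * α (w.1,(0:V₂),w.2) (w'.1,(0:V₂),w'.2)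
          - α ((0:V₁),b,(0:V₃)) (w.1,(0:V₂),w.2) * β ((0:V₁),b',(0:V₃)) (w'.1,(0:V₂),w'.2)
          + α ((0:V₁),b,(0:V₃)) (w'.1,(0:V₂),w'.2) * β ((0:V₁),b',(0:V₃)) (w.1,(0:V₂),w.2)
          - β ((0:V₁),b,(0:V₃)) (w.1,(0:V₂),w.2) * α ((0:V₁),b',(0:V₃)) (w'.1,(0:V₂),w'.2)
          + β ((0:V₁),b,(0:V₃)) (w'.1,(0:V₂),w'.2) * α ((0:V₁),b',(0:V₃)) (w.1,(0:V₂),w.2) := by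
  have h := heq ((0:V₁),b,(0:V₃)) ((0:V₁),b',(0:V₃)) (w.1,(0:V₂),w.2) (w'.1,(0:V₂),w'.2)
  simp only [wedgeProd, Prod.fst_zero, Prod.snd_zero, map_zero, LinearMap.zero_apply,
    zero_mul, mul_zero, add_zero, zero_add, sub_zero, zero_sub, neg_zero] at h
  linear_combination h

lemma idF1 (heq : MainEq ω₁ ω₂ ω₃ α β) (a₁ a₂ a₃ a₄ : V₁) :
    0 = α (a₁,0) (a₂,0) * β (a₃,0) (a₄,0) - α (a₁,0) (a₃,0) * β (a₂,0) (a₄,0)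
      + α (a₁,0) (a₄,0) * β (a₂,0) (a₃,0) + β (a₁,0) (a₂,0) * α (a₃,0) (a₄,0)
      - β (a₁,0) (a₃,0) * α (a₂,0) (a₄,0) + β (a₁,0) (a₄,0) * α (a₂,0) (a₃,0) := by
  have h := heq (a₁,0) (a₂,0) (a₃,0) (a₄,0)
  simp only [wedgeProd, Prod.fst_zero, Prod.snd_zero, map_zero, LinearMap.zero_apply,
    zero_mul, mul_zero, add_zero, zero_add, sub_zero, zero_sub, neg_zero] at h
  linear_combination h

lemma idF2 (heq : MainEq ω₁ ω₂ ω₃ α β) (b₁ b₂ b₃ b₄ : V₂) :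
    0 = α ((0:V₁),b₁,(0:V₃)) ((0:V₁),b₂,(0:V₃)) * β ((0:V₁),b₃,(0:V₃)) ((0:V₁),b₄,(0:V₃))
      - α ((0:V₁),b₁,(0:V₃)) ((0:V₁),b₃,(0:V₃)) * β ((0:V₁),b₂,(0:V₃)) ((0:V₁),b₄,(0:V₃))
      + α ((0:V₁),b₁,(0:V₃)) ((0:V₁),b₄,(0:V₃)) * β ((0:V₁),b₂,(0:V₃)) ((0:V₁),b₃,(0:V₃))
      + β ((0:V₁),b₁,(0:V₃)) ((0:V₁),b₂,(0:V₃)) * α ((0:V₁),b₃,(0:V₃)) ((0:V₁),b₄,(0:V₃))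
      - β ((0:V₁),b₁,(0:V₃)) ((0:V₁),b₃,(0:V₃)) * α ((0:V₁),b₂,(0:V₃)) ((0:V₁),b₄,(0:V₃))
      + β ((0:V₁),b₁,(0:V₃)) ((0:V₁),b₄,(0:V₃)) * α ((0:V₁),b₂,(0:V₃)) ((0:V₁),b₃,(0:V₃)) := by
  have h := heq ((0:V₁),b₁,(0:V₃)) ((0:V₁),b₂,(0:V₃)) ((0:V₁),b₃,(0:V₃)) ((0:V₁),b₄,(0:V₃))
  simp only [wedgeProd, Prod.fst_zero, Prod.snd_zero, map_zero, LinearMap.zero_apply,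
    zero_mul, mul_zero, add_zero, zero_add, sub_zero, zero_sub, neg_zero] at h
  linear_combination h

lemma idF3 (heq : MainEq ω₁ ω₂ ω₃ α β) (c₁ c₂ c₃ c₄ : V₃) :
    0 = α ((0:V₁),(0:V₂),c₁) ((0:V₁),(0:V₂),c₂) * β ((0:V₁),(0:V₂),c₃) ((0:V₁),(0:V₂),c₄)
      - α ((0:V₁),(0:V₂),c₁) ((0:V₁),(0:V₂),c₃) * β ((0:V₁),(0:V₂),c₂) ((0:V₁),(0:V₂),c₄)
      + α ((0:V₁),(0:V₂),c₁) ((0:V₁),(0:V₂),c₄) * β ((0:V₁),(0:V₂),c₂) ((0:V₁),(0:V₂),c₃)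
      + β ((0:V₁),(0:V₂),c₁) ((0:V₁),(0:V₂),c₂) * α ((0:V₁),(0:V₂),c₃) ((0:V₁),(0:V₂),c₄)
      - β ((0:V₁),(0:V₂),c₁) ((0:V₁),(0:V₂),c₃) * α ((0:V₁),(0:V₂),c₂) ((0:V₁),(0:V₂),c₄)
      + β ((0:V₁),(0:V₂),c₁) ((0:V₁),(0:V₂),c₄) * α ((0:V₁),(0:V₂),c₂) ((0:V₁),(0:V₂),c₃) := by
  have h := heq ((0:V₁),(0:V₂),c₁) ((0:V₁),(0:V₂),c₂) ((0:V₁),(0:V₂),c₃) ((0:V₁),(0:V₂),c₄)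
  simp only [wedgeProd, Prod.fst_zero, Prod.snd_zero, map_zero, LinearMap.zero_apply,
    zero_mul, mul_zero, add_zero, zero_add, sub_zero, zero_sub, neg_zero] at h
  linear_combination h

lemma idG1 (heq : MainEq ω₁ ω₂ ω₃ α β) (b b' : V₂) (c c' : V₃) :
    ω₂ b b' * ω₃ c c'
      = α ((0:V₁),b,(0:V₃)) ((0:V₁),b',(0:V₃)) * β ((0:V₁),(0:V₂),c) ((0:V₁),(0:V₂),c')
      - α ((0:V₁),b,(0:V₃)) ((0:V₁),(0:V₂),c) * β ((0:V₁),b',(0:V₃)) ((0:V₁),(0:V₂),c')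
      + α ((0:V₁),b,(0:V₃)) ((0:V₁),(0:V₂),c') * β ((0:V₁),b',(0:V₃)) ((0:V₁),(0:V₂),c)
      + β ((0:V₁),b,(0:V₃)) ((0:V₁),b',(0:V₃)) * α ((0:V₁),(0:V₂),c) ((0:V₁),(0:V₂),c')
      - β ((0:V₁),b,(0:V₃)) ((0:V₁),(0:V₂),c) * α ((0:V₁),b',(0:V₃)) ((0:V₁),(0:V₂),c')
      + β ((0:V₁),b,(0:V₃)) ((0:V₁),(0:V₂),c') * α ((0:V₁),b',(0:V₃)) ((0:V₁),(0:V₂),c) := by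
  have h := heq ((0:V₁),b,(0:V₃)) ((0:V₁),b',(0:V₃)) ((0:V₁),(0:V₂),c) ((0:V₁),(0:V₂),c')
  simp only [wedgeProd, Prod.fst_zero, Prod.snd_zero, map_zero, LinearMap.zero_apply,
    zero_mul, mul_zero, add_zero, zero_add, sub_zero, zero_sub, neg_zero] at h
  linear_combination h



lemma caseA [FiniteDimensional K V₂] [FiniteDimensional K V₃]
    (g : ℕ) (hg : 13 ≤ g)
    (hd₂ : finrank K V₂ = 2*g) (hd₃ : finrank K V₃ = 2*g)
    (hnd₂ : ∀ v : V₂, (∀ w : V₂, ω₂ v w = 0) → v = 0)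
    (hnd₃ : ∀ v : V₃, (∀ w : V₃, ω₃ v w = 0) → v = 0)
    (heq : MainEq ω₁ ω₂ ω₃ α β)
    (hp : ∃ a a' : V₁, α (a,0) (a',0) = 0 ∧ β (a,0) (a',0) ≠ 0)
    (hq : ∃ a a' : V₁, β (a,0) (a',0) = 0 ∧ α (a,0) (a',0) ≠ 0) : False := by
  obtain ⟨a₁, a₂, hpa, hpb⟩ := hp
  obtain ⟨d₁, d₂, hqb, hqa⟩ := hq
  set μ : K := ω₁ a₁ a₂ / β (a₁,0) (a₂,0) with hμ
  set lam : K := ω₁ d₁ d₂ / α (d₁,0) (d₂,0) with hlam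
  -- the two "value" lemmas
  have hAval : ∀ (x x' : V₂) (y y' : V₃),
      (α (a₁,0) ((0:V₁),x,y) = 0 ∧ α (a₂,0) ((0:V₁),x,y) = 0 ∧
       β (a₁,0) ((0:V₁),x,y) = 0 ∧ β (a₂,0) ((0:V₁),x,y) = 0) →
      (α (a₁,0) ((0:V₁),x',y') = 0 ∧ α (a₂,0) ((0:V₁),x',y') = 0 ∧
       β (a₁,0) ((0:V₁),x',y') = 0 ∧ β (a₂,0) ((0:V₁),x',y') = 0) →
      α ((0:V₁),x,y) ((0:V₁),x',y') = μ * (ω₂ x x' + ω₃ y y') := by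
    rintro x x' y y' ⟨k1,k2,k3,k4⟩ ⟨k5,k6,k7,k8⟩
    have h := idE1 heq a₁ a₂ (x,y) (x',y')
    simp only [] at h
    rw [hpa, k1, k3, k5, k7] at h
    rw [hμ, div_mul_eq_mul_div, eq_div_iff hpb]
    linear_combination -h
  have hBval : ∀ (x x' : V₂) (y y' : V₃),
      (α (d₁,0) ((0:V₁),x,y) = 0 ∧ α (d₂,0) ((0:V₁),x,y) = 0 ∧
       β (d₁,0) ((0:V₁),x,y) = 0 ∧ β (d₂,0) ((0:V₁),x,y) = 0) →
      (α (d₁,0) ((0:V₁),x',y') = 0 ∧ α (d₂,0) ((0:V₁),x',y') = 0 ∧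
       β (d₁,0) ((0:V₁),x',y') = 0 ∧ β (d₂,0) ((0:V₁),x',y') = 0) →
      β ((0:V₁),x,y) ((0:V₁),x',y') = lam * (ω₂ x x' + ω₃ y y') := by
    rintro x x' y y' ⟨k1,k2,k3,k4⟩ ⟨k5,k6,k7,k8⟩
    have h := idE1 heq d₁ d₂ (x,y) (x',y')
    simp only [] at h
    rw [hqb, k3, k1, k7, k5] at h
    rw [hlam, div_mul_eq_mul_div, eq_div_iff hqa]
    linear_combination -h
  -- functionals on V₂ and on V₃
  set e2 : V₂ →ₗ[K] V₁ × V₂ × V₃ :=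
    (LinearMap.inr K V₁ (V₂ × V₃)).comp (LinearMap.inl K V₂ V₃) with he2
  set e3 : V₃ →ₗ[K] V₁ × V₂ × V₃ :=
    (LinearMap.inr K V₁ (V₂ × V₃)).comp (LinearMap.inr K V₂ V₃) with he3
  have e2app : ∀ x : V₂, e2 x = ((0:V₁),x,(0:V₃)) := fun x => rfl
  have e3app : ∀ y : V₃, e3 y = ((0:V₁),(0:V₂),y) := fun y => rfl
  set u2 : Fin 8 → (V₂ →ₗ[K] K) :=
    ![(α (a₁,0)).comp e2, (α (a₂,0)).comp e2, (β (a₁,0)).comp e2, (β (a₂,0)).comp e2,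
      (α (d₁,0)).comp e2, (α (d₂,0)).comp e2, (β (d₁,0)).comp e2, (β (d₂,0)).comp e2] with hu2
  set u3 : Fin 8 → (V₃ →ₗ[K] K) :=
    ![(α (a₁,0)).comp e3, (α (a₂,0)).comp e3, (β (a₁,0)).comp e3, (β (a₂,0)).comp e3,
      (α (d₁,0)).comp e3, (α (d₂,0)).comp e3, (β (d₁,0)).comp e3, (β (d₂,0)).comp e3] with hu3
  obtain ⟨b₁, b₂, b₃, b₄, kb₁, kb₂, kb₃, kb₄, s12, s34, s13, s14, s23, s24⟩ :=
    tool_quad ω₂ hnd₂ u2 (by rw [hd₂]; omega)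
  obtain ⟨c, c', kc, kc', scc⟩ := tool_pair ω₃ hnd₃ u3 (by rw [hd₃]; omega)
  -- kernel packages
  have pack2 : ∀ x : V₂, (∀ j, u2 j x = 0) →
      ((α (a₁,0) ((0:V₁),x,(0:V₃)) = 0 ∧ α (a₂,0) ((0:V₁),x,(0:V₃)) = 0 ∧
        β (a₁,0) ((0:V₁),x,(0:V₃)) = 0 ∧ β (a₂,0) ((0:V₁),x,(0:V₃)) = 0) ∧
       (α (d₁,0) ((0:V₁),x,(0:V₃)) = 0 ∧ α (d₂,0) ((0:V₁),x,(0:V₃)) = 0 ∧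
        β (d₁,0) ((0:V₁),x,(0:V₃)) = 0 ∧ β (d₂,0) ((0:V₁),x,(0:V₃)) = 0)) := by
    intro x hx
    refine ⟨⟨?_,?_,?_,?_⟩,⟨?_,?_,?_,?_⟩⟩
    · simpa [hu2, e2app] using hx 0
    · simpa [hu2, e2app] using hx 1
    · simpa [hu2, e2app] using hx 2
    · simpa [hu2, e2app] using hx 3
    · simpa [hu2, e2app] using hx 4
    · simpa [hu2, e2app] using hx 5
    · simpa [hu2, e2app] using hx 6
    · simpa [hu2, e2app] using hx 7
  have pack3 : ∀ y : V₃, (∀ j, u3 j y = 0) →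
      ((α (a₁,0) ((0:V₁),(0:V₂),y) = 0 ∧ α (a₂,0) ((0:V₁),(0:V₂),y) = 0 ∧
        β (a₁,0) ((0:V₁),(0:V₂),y) = 0 ∧ β (a₂,0) ((0:V₁),(0:V₂),y) = 0) ∧
       (α (d₁,0) ((0:V₁),(0:V₂),y) = 0 ∧ α (d₂,0) ((0:V₁),(0:V₂),y) = 0 ∧
        β (d₁,0) ((0:V₁),(0:V₂),y) = 0 ∧ β (d₂,0) ((0:V₁),(0:V₂),y) = 0)) := by
    intro y hy
    refine ⟨⟨?_,?_,?_,?_⟩,⟨?_,?_,?_,?_⟩⟩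
    · simpa [hu3, e3app] using hy 0
    · simpa [hu3, e3app] using hy 1
    · simpa [hu3, e3app] using hy 2
    · simpa [hu3, e3app] using hy 3
    · simpa [hu3, e3app] using hy 4
    · simpa [hu3, e3app] using hy 5
    · simpa [hu3, e3app] using hy 6
    · simpa [hu3, e3app] using hy 7
  obtain ⟨Pb₁, Qb₁⟩ := pack2 b₁ kb₁
  obtain ⟨Pb₂, Qb₂⟩ := pack2 b₂ kb₂
  obtain ⟨Pb₃, Qb₃⟩ := pack2 b₃ kb₃
  obtain ⟨Pb₄, Qb₄⟩ := pack2 b₄ kb₄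
  obtain ⟨Pc, Qc⟩ := pack3 c kc
  obtain ⟨Pc', Qc'⟩ := pack3 c' kc'
  -- relation (1) : 1 = 2 μ lam, from the mixed quadruple
  have key1 : (1:K) = 2*(μ*lam) := by
    have h := idG1 heq b₁ b₂ c c'
    rw [hAval b₁ b₂ (0:V₃) (0:V₃) Pb₁ Pb₂,
        hAval b₁ (0:V₂) (0:V₃) c Pb₁ Pc,
        hAval b₁ (0:V₂) (0:V₃) c' Pb₁ Pc',
        hAval (0:V₂) (0:V₂) c c' Pc Pc',
        hBval b₁ b₂ (0:V₃) (0:V₃) Qb₁ Qb₂,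
        hBval b₁ (0:V₂) (0:V₃) c Qb₁ Qc,
        hBval b₁ (0:V₂) (0:V₃) c' Qb₁ Qc',
        hBval (0:V₂) (0:V₂) c c' Qc Qc',
        hBval b₂ (0:V₂) (0:V₃) c Qb₂ Qc,
        hBval b₂ (0:V₂) (0:V₃) c' Qb₂ Qc',
        hAval b₂ (0:V₂) (0:V₃) c Pb₂ Pc,
        hAval b₂ (0:V₂) (0:V₃) c' Pb₂ Pc'] at h
    rw [s12, scc] at h
    simp only [map_zero, LinearMap.zero_apply, add_zero, zero_add, mul_zero, zero_mul] at h
    linear_combination h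
  -- relation (2) : 0 = 2 μ lam, from a symplectic quadruple in V₂
  have key2 : (0:K) = 2*(μ*lam) := by
    have h := idF2 heq b₁ b₂ b₃ b₄
    rw [hAval b₁ b₂ (0:V₃) (0:V₃) Pb₁ Pb₂,
        hAval b₁ b₃ (0:V₃) (0:V₃) Pb₁ Pb₃,
        hAval b₁ b₄ (0:V₃) (0:V₃) Pb₁ Pb₄,
        hAval b₂ b₃ (0:V₃) (0:V₃) Pb₂ Pb₃,
        hAval b₂ b₄ (0:V₃) (0:V₃) Pb₂ Pb₄,
        hAval b₃ b₄ (0:V₃) (0:V₃) Pb₃ Pb₄,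
        hBval b₁ b₂ (0:V₃) (0:V₃) Qb₁ Qb₂,
        hBval b₁ b₃ (0:V₃) (0:V₃) Qb₁ Qb₃,
        hBval b₁ b₄ (0:V₃) (0:V₃) Qb₁ Qb₄,
        hBval b₂ b₃ (0:V₃) (0:V₃) Qb₂ Qb₃,
        hBval b₂ b₄ (0:V₃) (0:V₃) Qb₂ Qb₄,
        hBval b₃ b₄ (0:V₃) (0:V₃) Qb₃ Qb₄] at h
    rw [s12, s34, s13, s14, s23, s24] at h
    simp only [map_zero, LinearMap.zero_apply, add_zero, zero_add, mul_zero, zero_mul] at h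
    linear_combination h
  rw [← key1] at key2
  exact one_ne_zero key2.symm


lemma core [CharZero K] [FiniteDimensional K V₁] [FiniteDimensional K V₂] [FiniteDimensional K V₃]
    (g : ℕ) (hg : 13 ≤ g)
    (hd₁ : finrank K V₁ = 2*g) (hd₂ : finrank K V₂ = 2*g) (hd₃ : finrank K V₃ = 2*g)
    (hnd₁ : ∀ v : V₁, (∀ w : V₁, ω₁ v w = 0) → v = 0)
    (hnd₂ : ∀ v : V₂, (∀ w : V₂, ω₂ v w = 0) → v = 0)
    (hnd₃ : ∀ v : V₃, (∀ w : V₃, ω₃ v w = 0) → v = 0)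
    (hAltα : LinearMap.IsAlt α)
    (heq : MainEq ω₁ ω₂ ω₃ α β)
    (himp : ∀ a a' : V₁, α (a,0) (a',0) = 0 → β (a,0) (a',0) = 0) : False := by
  have hV₁ : Nontrivial V₁ := Module.nontrivial_of_finrank_pos (R := K) (by omega)
  -- the form σ on V₂ × V₃
  set σ : LinearMap.BilinForm K (V₂ × V₃) :=
    ω₂.compl₁₂ (LinearMap.fst K V₂ V₃) (LinearMap.fst K V₂ V₃)
    + ω₃.compl₁₂ (LinearMap.snd K V₂ V₃) (LinearMap.snd K V₂ V₃) with hσ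
  have hσapp : ∀ w w' : V₂ × V₃, σ w w' = ω₂ w.1 w'.1 + ω₃ w.2 w'.2 := by
    intro w w'
    simp [hσ, LinearMap.compl₁₂_apply]
  have hσnd : ∀ v : V₂ × V₃, (∀ w : V₂ × V₃, σ v w = 0) → v = 0 := by
    intro v hv
    have h1 : v.1 = 0 := hnd₂ v.1 (fun w => by simpa [hσapp] using hv (w, 0))
    have h2 : v.2 = 0 := hnd₃ v.2 (fun w => by simpa [hσapp] using hv (0, w))
    exact Prod.ext h1 h2
  have hσdim : finrank K (V₂ × V₃) = 4*g := by
    rw [Module.finrank_prod, hd₂, hd₃]; ring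
  set eW : V₂ × V₃ →ₗ[K] V₁ × V₂ × V₃ := LinearMap.inr K V₁ (V₂ × V₃) with heW
  have heWapp : ∀ w : V₂ × V₃, eW w = ((0:V₁), w) := fun w => rfl
  -- Step 1/2 : for every pair with α₁ = 0 also ω₁ = 0
  have h2b : ∀ a a' : V₁, α (a,0) (a',0) = 0 → ω₁ a a' = 0 := by
    intro a a' hα
    have hβ := himp a a' hα
    have hkey : ∀ x y : V₂ × V₃, (-(ω₁ a a')) * σ x y =
        ((α (a,0)).comp eW) x * ((β (a',0)).comp eW) y - ((α (a,0)).comp eW) y * ((β (a',0)).comp eW) x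
        + (((β (a,0)).comp eW) x * ((α (a',0)).comp eW) y - ((β (a,0)).comp eW) y * ((α (a',0)).comp eW) x) := by
      intro x y
      have h := idE1 heq a a' x y
      rw [hα, hβ] at h
      simp only [LinearMap.comp_apply, heWapp, hσapp]
      linear_combination -h
    have hL5 := tool_L5 σ hσnd (by rw [hσdim]; omega) (-(ω₁ a a'))
      ((α (a,0)).comp eW) ((β (a',0)).comp eW) ((β (a,0)).comp eW) ((α (a',0)).comp eW) hkey
    exact neg_eq_zero.1 hL5
  -- Step 3 : ω₁ = c' • α₁ with c' ≠ 0
  obtain ⟨c', hc'⟩ : ∃ c' : K, ∀ a b : V₁, ω₁ a b = c' * α (a,0) (b,0) := by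
    have halt : (α.compl₁₂ (LinearMap.inl K V₁ (V₂ × V₃)) (LinearMap.inl K V₁ (V₂ × V₃))).IsAlt := by
      intro a
      simp only [LinearMap.compl₁₂_apply, LinearMap.inl_apply]
      exact hAltα _
    obtain ⟨c', hc'⟩ := tool_prop
      (α.compl₁₂ (LinearMap.inl K V₁ (V₂ × V₃)) (LinearMap.inl K V₁ (V₂ × V₃))) ω₁ halt
      (by intro a b hab
          simp only [LinearMap.compl₁₂_apply, LinearMap.inl_apply] at hab
          exact h2b a b hab)
    exact ⟨c', fun a b => by
      have := hc' a b
      simpa [LinearMap.compl₁₂_apply, LinearMap.inl_apply] using this⟩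
  have hc'0 : c' ≠ 0 := by
    intro hz
    obtain ⟨a, ha⟩ := exists_ne (0 : V₁)
    exact ha (hnd₁ a (fun w => by rw [hc' a w, hz, zero_mul]))
  -- Step 4 : β₁ = c • α₁
  obtain ⟨c, hc⟩ : ∃ c : K, ∀ a b : V₁, β (a,0) (b,0) = c * α (a,0) (b,0) := by
    have halt : (α.compl₁₂ (LinearMap.inl K V₁ (V₂ × V₃)) (LinearMap.inl K V₁ (V₂ × V₃))).IsAlt := by
      intro a
      simp only [LinearMap.compl₁₂_apply, LinearMap.inl_apply]
      exact hAltα _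
    obtain ⟨c, hc⟩ := tool_prop
      (α.compl₁₂ (LinearMap.inl K V₁ (V₂ × V₃)) (LinearMap.inl K V₁ (V₂ × V₃)))
      (β.compl₁₂ (LinearMap.inl K V₁ (V₂ × V₃)) (LinearMap.inl K V₁ (V₂ × V₃))) halt
      (by intro a b hab
          simp only [LinearMap.compl₁₂_apply, LinearMap.inl_apply] at hab ⊢
          exact himp a b hab)
    exact ⟨c, fun a b => by
      have := hc a b
      simpa [LinearMap.compl₁₂_apply, LinearMap.inl_apply] using this⟩
  -- Step 5 : in fact c = 0, i.e. β₁ = 0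
  have hβ1 : ∀ a b : V₁, β (a,0) (b,0) = 0 := by
    obtain ⟨x₁, x₂, x₃, x₄, -, -, -, -, s12, s34, s13, s14, s23, s24⟩ :=
      tool_quad ω₁ hnd₁ (![] : Fin 0 → V₁ →ₗ[K] K) (by rw [hd₁]; omega)
    have a13 : α (x₁,0) (x₃,0) = 0 := by
      have := hc' x₁ x₃; rw [s13] at this
      exact ((mul_eq_zero.1 this.symm).resolve_left hc'0)
    have a14 : α (x₁,0) (x₄,0) = 0 := by
      have := hc' x₁ x₄; rw [s14] at this
      exact ((mul_eq_zero.1 this.symm).resolve_left hc'0)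
    have a23 : α (x₂,0) (x₃,0) = 0 := by
      have := hc' x₂ x₃; rw [s23] at this
      exact ((mul_eq_zero.1 this.symm).resolve_left hc'0)
    have a24 : α (x₂,0) (x₄,0) = 0 := by
      have := hc' x₂ x₄; rw [s24] at this
      exact ((mul_eq_zero.1 this.symm).resolve_left hc'0)
    have a12 : α (x₁,0) (x₂,0) = 1/c' := by
      have := hc' x₁ x₂; rw [s12] at this; field_simp; linear_combination -this
    have a34 : α (x₃,0) (x₄,0) = 1/c' := by
      have := hc' x₃ x₄; rw [s34] at this; field_simp; linear_combination -this
    have h := idF1 heq x₁ x₂ x₃ x₄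
    rw [hc x₁ x₂, hc x₁ x₃, hc x₁ x₄, hc x₂ x₃, hc x₂ x₄, hc x₃ x₄,
      a12, a34, a13, a14, a23, a24] at h
    have hc0 : c = 0 := by
      field_simp at h
      linear_combination ((-1:K)/2) * h
    intro a b
    rw [hc a b, hc0, zero_mul]
  -- Step 6 : a pair p₀ with ω₁ p₀ ≠ 0
  obtain ⟨a₀, ha₀⟩ := exists_ne (0 : V₁)
  obtain ⟨a₀', hp₀⟩ : ∃ a₀' : V₁, ω₁ a₀ a₀' ≠ 0 := by
    by_contra hcon
    push_neg at hcon
    exact ha₀ (hnd₁ a₀ hcon)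
  have hα₀ : α (a₀,0) (a₀',0) ≠ 0 := fun hz => hp₀ (h2b a₀ a₀' hz)
  set κ : K := ω₁ a₀ a₀' / α (a₀,0) (a₀',0) with hκdef
  have hκ0 : κ ≠ 0 := div_ne_zero hp₀ hα₀
  set e2 : V₂ →ₗ[K] V₁ × V₂ × V₃ :=
    (LinearMap.inr K V₁ (V₂ × V₃)).comp (LinearMap.inl K V₂ V₃) with he2
  set e3 : V₃ →ₗ[K] V₁ × V₂ × V₃ :=
    (LinearMap.inr K V₁ (V₂ × V₃)).comp (LinearMap.inr K V₂ V₃) with he3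
  have e2app : ∀ x : V₂, e2 x = ((0:V₁),x,(0:V₃)) := fun x => rfl
  have e3app : ∀ y : V₃, e3 y = ((0:V₁),(0:V₂),y) := fun y => rfl
  have e1app : ∀ v : V₁, (LinearMap.inl K V₁ (V₂ × V₃)) v = (v, 0) := fun v => rfl
  -- Step 8 : dichotomy on V₂
  by_cases hR1 : ∃ b b' : V₂, α ((0:V₁),b,(0:V₃)) ((0:V₁),b',(0:V₃)) = 0 ∧
      β ((0:V₁),b,(0:V₃)) ((0:V₁),b',(0:V₃)) ≠ 0
  · -- case yes : a mixed pair kills everything via V₃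
    obtain ⟨b, b', hα2, hβ2⟩ := hR1
    set d₀ : K := β ((0:V₁),b,(0:V₃)) ((0:V₁),b',(0:V₃)) with hd₀def
    -- (i) d₀ = c' * ω₂ b b'
    have hkey : ∀ v v' : V₁, (c' * ω₂ b b' - d₀) * ω₁ v v' =
        ((-c') • ((α ((0:V₁),b,(0:V₃))).comp (LinearMap.inl K V₁ (V₂ × V₃)))) v
          * ((β ((0:V₁),b',(0:V₃))).comp (LinearMap.inl K V₁ (V₂ × V₃))) v'
        - ((-c') • ((α ((0:V₁),b,(0:V₃))).comp (LinearMap.inl K V₁ (V₂ × V₃)))) v'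
          * ((β ((0:V₁),b',(0:V₃))).comp (LinearMap.inl K V₁ (V₂ × V₃))) v
        + (((-c') • ((β ((0:V₁),b,(0:V₃))).comp (LinearMap.inl K V₁ (V₂ × V₃)))) v
            * ((α ((0:V₁),b',(0:V₃))).comp (LinearMap.inl K V₁ (V₂ × V₃))) v'
          - ((-c') • ((β ((0:V₁),b,(0:V₃))).comp (LinearMap.inl K V₁ (V₂ × V₃)))) v'
            * ((α ((0:V₁),b',(0:V₃))).comp (LinearMap.inl K V₁ (V₂ × V₃))) v) := by
      intro v v'
      have h := idE2 heq b b' (v, (0:V₃)) (v', (0:V₃))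
      simp only [Prod.mk_zero_zero, map_zero, LinearMap.zero_apply, add_zero, zero_add] at h
      rw [hα2] at h
      have hα1v := hc' v v'
      simp only [LinearMap.comp_apply, LinearMap.smul_apply, e1app, smul_eq_mul, hd₀def]
      linear_combination c' * h - (β ((0:V₁),b,(0:V₃))) ((0:V₁),b',(0:V₃)) * hα1v
    have hd₀ : d₀ = c' * ω₂ b b' := by
      have := tool_L5 ω₁ hnd₁ (by rw [hd₁]; omega) (c' * ω₂ b b' - d₀) _ _ _ _ hkey
      linear_combination -this
    have hω₂bb : ω₂ b b' ≠ 0 := by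
      intro hz
      rw [hz, mul_zero] at hd₀
      exact hβ2 hd₀
    set ν : K := ω₂ b b' / d₀ with hνdef
    have hν0 : ν ≠ 0 := div_ne_zero hω₂bb hβ2
    -- (ii) contradiction via a symplectic quadruple in V₃
    set u3 : Fin 8 → (V₃ →ₗ[K] K) :=
      ![(α ((0:V₁),b,(0:V₃))).comp e3, (α ((0:V₁),b',(0:V₃))).comp e3,
        (β ((0:V₁),b,(0:V₃))).comp e3, (β ((0:V₁),b',(0:V₃))).comp e3,
        (α (a₀,0)).comp e3, (α (a₀',0)).comp e3,
        (β (a₀,0)).comp e3, (β (a₀',0)).comp e3] with hu3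
    obtain ⟨y₁, y₂, y₃, y₄, ky₁, ky₂, ky₃, ky₄, s12, s34, s13, s14, s23, s24⟩ :=
      tool_quad ω₃ hnd₃ u3 (by rw [hd₃]; omega)
    have pack3 : ∀ y : V₃, (∀ j, u3 j y = 0) →
        ((α ((0:V₁),b,(0:V₃)) ((0:V₁),(0:V₂),y) = 0 ∧ α ((0:V₁),b',(0:V₃)) ((0:V₁),(0:V₂),y) = 0 ∧
          β ((0:V₁),b,(0:V₃)) ((0:V₁),(0:V₂),y) = 0 ∧ β ((0:V₁),b',(0:V₃)) ((0:V₁),(0:V₂),y) = 0) ∧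
         (α (a₀,0) ((0:V₁),(0:V₂),y) = 0 ∧ α (a₀',0) ((0:V₁),(0:V₂),y) = 0 ∧
          β (a₀,0) ((0:V₁),(0:V₂),y) = 0 ∧ β (a₀',0) ((0:V₁),(0:V₂),y) = 0)) := by
      intro y hy
      refine ⟨⟨?_,?_,?_,?_⟩,⟨?_,?_,?_,?_⟩⟩
      · simpa [hu3, e3app] using hy 0
      · simpa [hu3, e3app] using hy 1
      · simpa [hu3, e3app] using hy 2
      · simpa [hu3, e3app] using hy 3
      · simpa [hu3, e3app] using hy 4
      · simpa [hu3, e3app] using hy 5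
      · simpa [hu3, e3app] using hy 6
      · simpa [hu3, e3app] using hy 7
    obtain ⟨P₁, Q₁⟩ := pack3 y₁ ky₁
    obtain ⟨P₂, Q₂⟩ := pack3 y₂ ky₂
    obtain ⟨P₃, Q₃⟩ := pack3 y₃ ky₃
    obtain ⟨P₄, Q₄⟩ := pack3 y₄ ky₄
    have hαv : ∀ y y' : V₃,
        (α ((0:V₁),b,(0:V₃)) ((0:V₁),(0:V₂),y) = 0 ∧ α ((0:V₁),b',(0:V₃)) ((0:V₁),(0:V₂),y) = 0 ∧
         β ((0:V₁),b,(0:V₃)) ((0:V₁),(0:V₂),y) = 0 ∧ β ((0:V₁),b',(0:V₃)) ((0:V₁),(0:V₂),y) = 0) →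
        (α ((0:V₁),b,(0:V₃)) ((0:V₁),(0:V₂),y') = 0 ∧ α ((0:V₁),b',(0:V₃)) ((0:V₁),(0:V₂),y') = 0 ∧
         β ((0:V₁),b,(0:V₃)) ((0:V₁),(0:V₂),y') = 0 ∧ β ((0:V₁),b',(0:V₃)) ((0:V₁),(0:V₂),y') = 0) →
        α ((0:V₁),(0:V₂),y) ((0:V₁),(0:V₂),y') = ν * ω₃ y y' := by
      rintro y y' ⟨k1,k2,k3,k4⟩ ⟨k5,k6,k7,k8⟩
      have h := idE2 heq b b' ((0:V₁), y) ((0:V₁), y')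
      simp only [map_zero, LinearMap.zero_apply, zero_add] at h
      rw [hα2, k1, k3, k5, k7] at h
      rw [hνdef, div_mul_eq_mul_div, eq_div_iff hβ2]
      linear_combination -h
    have hβv : ∀ y y' : V₃,
        (α (a₀,0) ((0:V₁),(0:V₂),y) = 0 ∧ α (a₀',0) ((0:V₁),(0:V₂),y) = 0 ∧
         β (a₀,0) ((0:V₁),(0:V₂),y) = 0 ∧ β (a₀',0) ((0:V₁),(0:V₂),y) = 0) →
        (α (a₀,0) ((0:V₁),(0:V₂),y') = 0 ∧ α (a₀',0) ((0:V₁),(0:V₂),y') = 0 ∧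
         β (a₀,0) ((0:V₁),(0:V₂),y') = 0 ∧ β (a₀',0) ((0:V₁),(0:V₂),y') = 0) →
        β ((0:V₁),(0:V₂),y) ((0:V₁),(0:V₂),y') = κ * ω₃ y y' := by
      rintro y y' ⟨k1,k2,k3,k4⟩ ⟨k5,k6,k7,k8⟩
      have h := idE1 heq a₀ a₀' ((0:V₂), y) ((0:V₂), y')
      simp only [map_zero, LinearMap.zero_apply, zero_add] at h
      rw [hβ1 a₀ a₀', k1, k3, k5, k7] at h
      rw [hκdef, div_mul_eq_mul_div, eq_div_iff hα₀]
      linear_combination -h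
    have h := idF3 heq y₁ y₂ y₃ y₄
    rw [hαv y₁ y₂ P₁ P₂, hαv y₁ y₃ P₁ P₃, hαv y₁ y₄ P₁ P₄,
        hαv y₂ y₃ P₂ P₃, hαv y₂ y₄ P₂ P₄, hαv y₃ y₄ P₃ P₄,
        hβv y₁ y₂ Q₁ Q₂, hβv y₁ y₃ Q₁ Q₃, hβv y₁ y₄ Q₁ Q₄,
        hβv y₂ y₃ Q₂ Q₃, hβv y₂ y₄ Q₂ Q₄, hβv y₃ y₄ Q₃ Q₄] at h
    rw [s12, s34, s13, s14, s23, s24] at h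
    have hz : ν * κ = 0 := by linear_combination ((-1:K)/2) * h
    exact (mul_ne_zero hν0 hκ0) hz
  · -- case no
    push_neg at hR1
    obtain ⟨c₂, hc₂⟩ : ∃ c₂ : K, ∀ x x' : V₂,
        β ((0:V₁),x,(0:V₃)) ((0:V₁),x',(0:V₃)) = c₂ * α ((0:V₁),x,(0:V₃)) ((0:V₁),x',(0:V₃)) := by
      have halt : (α.compl₁₂ e2 e2).IsAlt := by
        intro x
        simp only [LinearMap.compl₁₂_apply, e2app]
        exact hAltα _
      obtain ⟨c₂, hc₂⟩ := tool_prop (α.compl₁₂ e2 e2) (β.compl₁₂ e2 e2) halt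
        (by intro x x' hab
            simp only [LinearMap.compl₁₂_apply, e2app] at hab ⊢
            exact hR1 x x' hab)
      exact ⟨c₂, fun x x' => by
        have := hc₂ x x'
        simpa [LinearMap.compl₁₂_apply, e2app] using this⟩
    by_cases hc₂0 : c₂ = 0
    · -- β₂ = 0 : contradiction via tool_L5 on V₂
      have hβ20 : ∀ x x' : V₂, β ((0:V₁),x,(0:V₃)) ((0:V₁),x',(0:V₃)) = 0 := by
        intro x x'; rw [hc₂ x x', hc₂0, zero_mul]
      have hkey : ∀ x x' : V₂, (-(ω₁ a₀ a₀')) * ω₂ x x' =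
          ((α (a₀,0)).comp e2) x * ((β (a₀',0)).comp e2) x'
          - ((α (a₀,0)).comp e2) x' * ((β (a₀',0)).comp e2) x
          + (((β (a₀,0)).comp e2) x * ((α (a₀',0)).comp e2) x'
            - ((β (a₀,0)).comp e2) x' * ((α (a₀',0)).comp e2) x) := by
        intro x x'
        have h := idE1 heq a₀ a₀' (x, (0:V₃)) (x', (0:V₃))
        simp only [map_zero, LinearMap.zero_apply, add_zero] at h
        rw [hβ1 a₀ a₀', hβ20 x x'] at h
        simp only [LinearMap.comp_apply, e2app]
        linear_combination -h
      have := tool_L5 ω₂ hnd₂ (by rw [hd₂]; omega) (-(ω₁ a₀ a₀')) _ _ _ _ hkey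
      exact hp₀ (neg_eq_zero.1 this)
    · -- c₂ ≠ 0 : contradiction via a symplectic quadruple in V₂
      set u4 : Fin 4 → (V₂ →ₗ[K] K) :=
        ![(α (a₀,0)).comp e2, (α (a₀',0)).comp e2,
          (β (a₀,0)).comp e2, (β (a₀',0)).comp e2] with hu4
      obtain ⟨x₁, x₂, x₃, x₄, kx₁, kx₂, kx₃, kx₄, s12, s34, s13, s14, s23, s24⟩ :=
        tool_quad ω₂ hnd₂ u4 (by rw [hd₂]; omega)
      have pack2 : ∀ x : V₂, (∀ j, u4 j x = 0) →
          (α (a₀,0) ((0:V₁),x,(0:V₃)) = 0 ∧ α (a₀',0) ((0:V₁),x,(0:V₃)) = 0 ∧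
           β (a₀,0) ((0:V₁),x,(0:V₃)) = 0 ∧ β (a₀',0) ((0:V₁),x,(0:V₃)) = 0) := by
        intro x hx
        refine ⟨?_,?_,?_,?_⟩
        · simpa [hu4, e2app] using hx 0
        · simpa [hu4, e2app] using hx 1
        · simpa [hu4, e2app] using hx 2
        · simpa [hu4, e2app] using hx 3
      have Q₁ := pack2 x₁ kx₁
      have Q₂ := pack2 x₂ kx₂
      have Q₃ := pack2 x₃ kx₃
      have Q₄ := pack2 x₄ kx₄
      have hβv : ∀ x x' : V₂,
          (α (a₀,0) ((0:V₁),x,(0:V₃)) = 0 ∧ α (a₀',0) ((0:V₁),x,(0:V₃)) = 0 ∧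
           β (a₀,0) ((0:V₁),x,(0:V₃)) = 0 ∧ β (a₀',0) ((0:V₁),x,(0:V₃)) = 0) →
          (α (a₀,0) ((0:V₁),x',(0:V₃)) = 0 ∧ α (a₀',0) ((0:V₁),x',(0:V₃)) = 0 ∧
           β (a₀,0) ((0:V₁),x',(0:V₃)) = 0 ∧ β (a₀',0) ((0:V₁),x',(0:V₃)) = 0) →
          β ((0:V₁),x,(0:V₃)) ((0:V₁),x',(0:V₃)) = κ * ω₂ x x' := by
        rintro x x' ⟨k1,k2,k3,k4⟩ ⟨k5,k6,k7,k8⟩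
        have h := idE1 heq a₀ a₀' (x, (0:V₃)) (x', (0:V₃))
        simp only [map_zero, LinearMap.zero_apply, add_zero] at h
        rw [hβ1 a₀ a₀', k1, k3, k5, k7] at h
        rw [hκdef, div_mul_eq_mul_div, eq_div_iff hα₀]
        linear_combination -h
      have hαv : ∀ x x' : V₂,
          (α (a₀,0) ((0:V₁),x,(0:V₃)) = 0 ∧ α (a₀',0) ((0:V₁),x,(0:V₃)) = 0 ∧
           β (a₀,0) ((0:V₁),x,(0:V₃)) = 0 ∧ β (a₀',0) ((0:V₁),x,(0:V₃)) = 0) →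
          (α (a₀,0) ((0:V₁),x',(0:V₃)) = 0 ∧ α (a₀',0) ((0:V₁),x',(0:V₃)) = 0 ∧
           β (a₀,0) ((0:V₁),x',(0:V₃)) = 0 ∧ β (a₀',0) ((0:V₁),x',(0:V₃)) = 0) →
          α ((0:V₁),x,(0:V₃)) ((0:V₁),x',(0:V₃)) = κ/c₂ * ω₂ x x' := by
        intro x x' hk hk'
        have h1 := hc₂ x x'
        rw [hβv x x' hk hk'] at h1
        rw [div_mul_eq_mul_div, eq_div_iff hc₂0]
        linear_combination -h1
      have h := idF2 heq x₁ x₂ x₃ x₄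
      rw [hαv x₁ x₂ Q₁ Q₂, hαv x₁ x₃ Q₁ Q₃, hαv x₁ x₄ Q₁ Q₄,
          hαv x₂ x₃ Q₂ Q₃, hαv x₂ x₄ Q₂ Q₄, hαv x₃ x₄ Q₃ Q₄,
          hβv x₁ x₂ Q₁ Q₂, hβv x₁ x₃ Q₁ Q₃, hβv x₁ x₄ Q₁ Q₄,
          hβv x₂ x₃ Q₂ Q₃, hβv x₂ x₄ Q₂ Q₄, hβv x₃ x₄ Q₃ Q₄] at h
      rw [s12, s34, s13, s14, s23, s24] at h
      field_simp [hc₂0] at h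
      exact hκ0 (mul_self_eq_zero.1 (by linear_combination ((-1:K)/2) * h))

end main


/-- Lemma 1.12 (lepourcurvedec): let `g ≥ 13` and let `V₁, V₂, V₃` be vector spaces of
dimension `2g` over a field of characteristic zero, each equipped with a nondegenerate
alternating bilinear form `ωᵢ`. Denoting by `ω̃ᵢ` the pullback of `ωᵢ` to
`V = V₁ × V₂ × V₃`, there do not exist alternating bilinear forms `B'`, `B''` on `V`
with `ω̃₁∧ω̃₂ + ω̃₂∧ω̃₃ + ω̃₁∧ω̃₃ = B'∧B''` in `⋀⁴V*`. -/
theorem no_wedge_factorization_of_sum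
    {K V₁ V₂ V₃ : Type*} [Field K] [CharZero K]
    [AddCommGroup V₁] [Module K V₁] [FiniteDimensional K V₁]
    [AddCommGroup V₂] [Module K V₂] [FiniteDimensional K V₂]
    [AddCommGroup V₃] [Module K V₃] [FiniteDimensional K V₃]
    (g : ℕ) (hg : 13 ≤ g)
    (hd₁ : Module.finrank K V₁ = 2 * g)
    (hd₂ : Module.finrank K V₂ = 2 * g)
    (hd₃ : Module.finrank K V₃ = 2 * g)
    (ω₁ : LinearMap.BilinForm K V₁) (ω₂ : LinearMap.BilinForm K V₂)
    (ω₃ : LinearMap.BilinForm K V₃)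
    (hAlt₁ : LinearMap.IsAlt ω₁) (hAlt₂ : LinearMap.IsAlt ω₂)
    (hAlt₃ : LinearMap.IsAlt ω₃)
    (hnd₁ : ∀ v : V₁, (∀ w : V₁, ω₁ v w = 0) → v = 0)
    (hnd₂ : ∀ v : V₂, (∀ w : V₂, ω₂ v w = 0) → v = 0)
    (hnd₃ : ∀ v : V₃, (∀ w : V₃, ω₃ v w = 0) → v = 0) :
    ¬ ∃ B' B'' : LinearMap.BilinForm K (V₁ × V₂ × V₃),
        LinearMap.IsAlt B' ∧ LinearMap.IsAlt B'' ∧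
        ∀ x₁ x₂ x₃ x₄ : V₁ × V₂ × V₃,
          wedgeProd (fun u w => ω₁ u.1 w.1) (fun u w => ω₂ u.2.1 w.2.1) x₁ x₂ x₃ x₄
          + wedgeProd (fun u w => ω₂ u.2.1 w.2.1) (fun u w => ω₃ u.2.2 w.2.2) x₁ x₂ x₃ x₄
          + wedgeProd (fun u w => ω₁ u.1 w.1) (fun u w => ω₃ u.2.2 w.2.2) x₁ x₂ x₃ x₄
          = wedgeProd (fun u w => B' u w) (fun u w => B'' u w) x₁ x₂ x₃ x₄ := by
  rintro ⟨B', B'', hAlt', hAlt'', heq⟩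
  have heq' : MainEq ω₁ ω₂ ω₃ B' B'' := heq
  by_cases hA : ∀ a a' : V₁, B' (a,0) (a',0) = 0 → B'' (a,0) (a',0) = 0
  · exact core g hg hd₁ hd₂ hd₃ hnd₁ hnd₂ hnd₃ hAlt' heq' hA
  · push_neg at hA
    obtain ⟨a, a', h1, h2⟩ := hA
    by_cases hB : ∀ a a' : V₁, B'' (a,0) (a',0) = 0 → B' (a,0) (a',0) = 0
    · have heq'' : MainEq ω₁ ω₂ ω₃ B'' B' := by
        intro x₁ x₂ x₃ x₄
        have h := heq' x₁ x₂ x₃ x₄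
        simp only [wedgeProd] at h ⊢
        linear_combination h
      exact core g hg hd₁ hd₂ hd₃ hnd₁ hnd₂ hnd₃ hAlt'' heq'' hB
    · push_neg at hB
      obtain ⟨d, d', h3, h4⟩ := hB
      exact caseA g hg hd₂ hd₃ hnd₂ hnd₃ heq' ⟨a, a', h1, h2⟩ ⟨d, d', h3, h4⟩
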